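/- For every n ≥ 1, the words α = (fa⁻¹)ⁿ(de⁻¹)ⁿ(ac⁻¹)^{n−1} and β = (fb⁻¹)ⁿ(de⁻¹)ⁿ(bc⁻¹)^{n−1} over X ∪ X⁻¹ (the Dicks–Leary generators of Stallings' group G_S) are geodesic words of length 3n−1 in (G_S,X): no strictly shorter word over X ∪ X⁻¹ represents the same element of G_S. -/

import Mathlib

/-! Stallings' group `G_S`: the kernel of the exponent-sum homomorphism
`φ : F(a,b) × F(c,d) × F(e,f) → ℤ`, with the 12-element Dicks–Leary generating
set `X = { y z⁻¹ : y ∈ {a,b}, z ∈ {c,d,e,f} } ∪ { y z⁻¹ : y ∈ {c,d}, z ∈ {e,f} }`. -/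

namespace Stallings

/-- A free group of rank 2. -/
abbrev F2 := FreeGroup (Fin 2)

/-- The ambient group `F = F(a,b) × F(c,d) × F(e,f)`. -/
abbrev F := F2 × F2 × F2

def a : F := (FreeGroup.of 0, 1, 1)
def b : F := (FreeGroup.of 1, 1, 1)
def c : F := (1, FreeGroup.of 0, 1)
def d : F := (1, FreeGroup.of 1, 1)
def e : F := (1, 1, FreeGroup.of 0)
def f : F := (1, 1, FreeGroup.of 1)

/-- The Dicks–Leary generating set
`X = { y z⁻¹ : y ∈ {a,b}, z ∈ {c,d,e,f} } ∪ { y z⁻¹ : y ∈ {c,d}, z ∈ {e,f} }`,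
viewed as a subset of `F` (each element lies in Stallings' group). -/
def Xs : Set F :=
  { a * c⁻¹, a * d⁻¹, a * e⁻¹, a * f⁻¹,
    b * c⁻¹, b * d⁻¹, b * e⁻¹, b * f⁻¹,
    c * e⁻¹, c * f⁻¹, d * e⁻¹, d * f⁻¹ }

/-- `w` is a word over `X ∪ X⁻¹`. -/
def IsWord (X : Set F) (w : List F) : Prop := ∀ x ∈ w, x ∈ X ∨ x⁻¹ ∈ X

/-! ### Auxiliary lemmas -/

open List

private lemma reduce_sublist {α : Type*} [DecidableEq α] (l : List (α × Bool)) :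
    FreeGroup.reduce l <+ l :=
  FreeGroup.Red.sublist FreeGroup.reduce.red

private lemma mk_flatten_toWord {α : Type*} [DecidableEq α] (l : List (FreeGroup α)) :
    FreeGroup.mk (l.map FreeGroup.toWord).flatten = l.prod := by
  induction l with
  | nil => exact FreeGroup.one_eq_mk.symm
  | cons x t ih => simp [← FreeGroup.mul_mk, ih, FreeGroup.mk_toWord]

private lemma reduce_two_blocks {α : Type*} [DecidableEq α] (x y : α × Bool)
    (hxy : ¬(x.1 = y.1 ∧ x.2 = !y.2)) (k m : ℕ) :
    FreeGroup.reduce (List.replicate k x ++ List.replicate m y)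
      = List.replicate k x ++ List.replicate m y := by
  induction k with
  | zero => simpa using FreeGroup.reduce_replicate m y
  | succ k ih =>
    rw [List.replicate_succ, List.cons_append, FreeGroup.reduce.cons, ih]
    cases k with
    | zero =>
      cases m with
      | zero => simp
      | succ m => simp [List.replicate_succ, hxy]
    | succ k => simp [List.replicate_succ]

private lemma head?_toList {γ : Type*} {l : List γ} (h : l.length ≤ 1) :
    l.head?.toList = l := by
  match l with
  | [] => rfl
  | [x] => rfl
  | x :: y :: t => simp at h

private lemma flatten_eq_reduceOption {β γ : Type*} (g : β → List γ) (w : List β)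
    (h1 : ∀ x ∈ w, (g x).length ≤ 1) :
    (w.map g).flatten = (w.map (fun x => (g x).head?)).reduceOption := by
  induction w with
  | nil => rfl
  | cons x t ih =>
    have hx := h1 x List.mem_cons_self
    have ht := fun y hy => h1 y (List.mem_cons_of_mem x hy)
    rw [List.map_cons, List.flatten_cons, List.map_cons, ih ht]
    cases hh : (g x).head? with
    | none =>
      rw [List.reduceOption_cons_of_none]
      have : (g x) = [] := by
        have := head?_toList hx
        rw [hh] at this; simpa using this.symm
      simp [this]
    | some s =>
      rw [List.reduceOption_cons_of_some]
      have : (g x) = [s] := by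
        have := head?_toList hx
        rw [hh] at this; simpa using this.symm
      simp [this]

private lemma some_reduceOption_sublist {γ : Type*} (l : List (Option γ)) :
    l.reduceOption.map some <+ l := by
  induction l with
  | nil => simp
  | cons o t ih =>
    cases o with
    | none => rw [List.reduceOption_cons_of_none]; exact ih.cons _
    | some s => rw [List.reduceOption_cons_of_some, List.map_cons]; exact ih.cons₂ _

private lemma exists_two_blocks {β : Type*} {l : List β} {s t : β} {k m : ℕ}
    (h : List.replicate k s ++ List.replicate m t <+ l) :
    ∃ I J : Finset ℕ, I.card = k ∧ J.card = m ∧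
      (∀ i ∈ I, ∃ hi : i < l.length, l[i] = s) ∧
      (∀ j ∈ J, ∃ hj : j < l.length, l[j] = t) ∧
      (∀ i ∈ I, ∀ j ∈ J, i < j) := by
  rw [List.sublist_iff_exists_fin_orderEmbedding_get_eq] at h
  obtain ⟨φ, hφ⟩ := h
  have hlen : (List.replicate k s ++ List.replicate m t).length = k + m := by simp
  have hcast : ∀ i : ℕ, i < k + m → i < (List.replicate k s ++ List.replicate m t).length := by
    omega
  refine ⟨Finset.univ.image (fun i : Fin k => (φ ⟨i.1, hcast i.1 (by omega)⟩).1),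
      Finset.univ.image (fun j : Fin m => (φ ⟨k + j.1, hcast _ (by omega)⟩).1), ?_, ?_, ?_, ?_, ?_⟩
  · rw [Finset.card_image_of_injective]
    · simp
    · intro i i' hii
      have h2 := φ.injective (Fin.val_injective hii)
      have h3 := congrArg Fin.val h2
      exact Fin.ext (by simpa using h3)
  · rw [Finset.card_image_of_injective]
    · simp
    · intro j j' hjj
      have h2 := φ.injective (Fin.val_injective hjj)
      have h3 := congrArg Fin.val h2
      simp only at h3
      exact Fin.ext (by omega)
  · intro i hi
    obtain ⟨i₀, -, rfl⟩ := Finset.mem_image.1 hi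
    refine ⟨(φ _).2, ?_⟩
    have h5 := (hφ ⟨i₀.1, hcast i₀.1 (by omega)⟩).symm
    rw [List.get_eq_getElem, List.get_eq_getElem] at h5
    rw [h5, List.getElem_append_left (by simp [i₀.2]), List.getElem_replicate]
  · intro j hj
    obtain ⟨j₀, -, rfl⟩ := Finset.mem_image.1 hj
    refine ⟨(φ _).2, ?_⟩
    have h5 := (hφ ⟨k + j₀.1, hcast _ (by omega)⟩).symm
    rw [List.get_eq_getElem, List.get_eq_getElem] at h5
    rw [h5, List.getElem_append_right (by simp)]
    simp
  · intro i hi j hj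
    obtain ⟨i₀, -, rfl⟩ := Finset.mem_image.1 hi
    obtain ⟨j₀, -, rfl⟩ := Finset.mem_image.1 hj
    exact φ.strictMono (by simp [Fin.lt_def]; omega)

/-- From a product equal to a two-block reduced word, extract the positions of the
surviving letters. -/
private lemma blocks_of_prod {u : List F2} (hu : ∀ x ∈ u, x.toWord.length ≤ 1)
    {k m : ℕ} {s t : Fin 2 × Bool} (hst : ¬(s.1 = t.1 ∧ s.2 = !t.2))
    (hprod : u.prod = FreeGroup.mk (List.replicate k s ++ List.replicate m t)) :
    ∃ I J : Finset ℕ, I.card = k ∧ J.card = m ∧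
      (∀ i ∈ I, ∃ hi : i < u.length, u[i].toWord.head? = some s) ∧
      (∀ j ∈ J, ∃ hj : j < u.length, u[j].toWord.head? = some t) ∧
      (∀ i ∈ I, ∀ j ∈ J, i < j) := by
  have hmk : FreeGroup.mk (u.map FreeGroup.toWord).flatten = u.prod := mk_flatten_toWord u
  have h1 : FreeGroup.reduce ((u.map FreeGroup.toWord).flatten)
      = List.replicate k s ++ List.replicate m t := by
    have h2 := congrArg FreeGroup.toWord (hmk.trans hprod)
    rwa [FreeGroup.toWord_mk, FreeGroup.toWord_mk, reduce_two_blocks s t hst k m] at h2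
  have hsub : (List.replicate k s ++ List.replicate m t) <+ (u.map FreeGroup.toWord).flatten := by
    rw [← h1]; exact reduce_sublist _
  rw [flatten_eq_reduceOption _ _ hu] at hsub
  have hsub2 : (List.replicate k s ++ List.replicate m t).map some
      <+ u.map (fun x => x.toWord.head?) :=
    (hsub.map some).trans (some_reduceOption_sublist _)
  rw [List.map_append, List.map_replicate, List.map_replicate] at hsub2
  obtain ⟨I, J, hI, hJ, hIs, hJt, hlt⟩ := exists_two_blocks hsub2
  refine ⟨I, J, hI, hJ, ?_, ?_, hlt⟩
  · intro i hi
    obtain ⟨hi', hval⟩ := hIs i hi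
    rw [List.length_map] at hi'
    refine ⟨hi', ?_⟩
    rw [List.getElem_map] at hval
    exact hval
  · intro j hj
    obtain ⟨hj', hval⟩ := hJt j hj
    rw [List.length_map] at hj'
    refine ⟨hj', ?_⟩
    rw [List.getElem_map] at hval
    exact hval

/-- The key facts about a letter of `X ∪ X⁻¹` used in the lower bound: its middle and right
components are single letters or trivial, it cannot simultaneously contribute a surviving `d`
(in the middle factor) and a surviving `f` (in the right factor), and it cannot simultaneously
contribute a surviving `c⁻¹` and a surviving `e⁻¹`. -/
private def okLetter (x : F) : Prop :=
  (x.2.1).toWord.length ≤ 1 ∧ (x.2.2).toWord.length ≤ 1 ∧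
    ¬((x.2.1).toWord.head? = some (1, true) ∧ (x.2.2).toWord.head? = some (1, true)) ∧
    ¬((x.2.1).toWord.head? = some (0, false) ∧ (x.2.2).toWord.head? = some (0, false))

private lemma okLetter_of {x : F} (hx : x ∈ Xs ∨ x⁻¹ ∈ Xs) : okLetter x := by
  rcases hx with h | h
  · simp only [Xs, Set.mem_insert_iff, Set.mem_singleton_iff] at h
    rcases h with h|h|h|h|h|h|h|h|h|h|h|h <;> subst h <;> (unfold okLetter; decide)
  · simp only [Xs, Set.mem_insert_iff, Set.mem_singleton_iff] at h
    rcases h with h|h|h|h|h|h|h|h|h|h|h|h <;>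
      · rw [← inv_inv x, h]; unfold okLetter; decide

/-- The main lower bound: any word over `X ∪ X⁻¹` whose product has middle component
`dⁿ c^{-(n-1)}` and right component `fⁿ e^{-n}` has length at least `3n - 1`. -/
private lemma lower_bound {n : ℕ} (hn : 1 ≤ n) {w : List F} (hw : IsWord Xs w)
    (h2 : w.prod.2.1 = FreeGroup.mk
      (List.replicate n ((1 : Fin 2), true) ++ List.replicate (n - 1) ((0 : Fin 2), false)))
    (h3 : w.prod.2.2 = FreeGroup.mk
      (List.replicate n ((1 : Fin 2), true) ++ List.replicate n ((0 : Fin 2), false))) :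
    3 * n - 1 ≤ w.length := by
  have hok : ∀ x ∈ w, okLetter x := fun x hx => okLetter_of (hw x hx)
  have hp2 : ∀ v : List F, (v.map (fun x : F => x.2.1)).prod = v.prod.2.1 := by
    intro v; induction v with
    | nil => rfl
    | cons x t ih => simp [ih]
  have hp3 : ∀ v : List F, (v.map (fun x : F => x.2.2)).prod = v.prod.2.2 := by
    intro v; induction v with
    | nil => rfl
    | cons x t ih => simp [ih]
  obtain ⟨I, J, hIcard, hJcard, hIval, hJval, hltIJ⟩ :=
    blocks_of_prod (u := w.map (fun x : F => x.2.1))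
      (by intro x hx; obtain ⟨y, hy, rfl⟩ := List.mem_map.1 hx; exact (hok y hy).1)
      (by decide) ((hp2 w).trans h2)
  obtain ⟨K, L, hKcard, hLcard, hKval, hLval, hltKL⟩ :=
    blocks_of_prod (u := w.map (fun x : F => x.2.2))
      (by intro x hx; obtain ⟨y, hy, rfl⟩ := List.mem_map.1 hx; exact (hok y hy).2.1)
      (by decide) ((hp3 w).trans h3)
  -- translate position facts to `w`
  have hIw : ∀ i ∈ I, ∃ hi : i < w.length, (w[i].2.1).toWord.head? = some (1, true) := by
    intro i hi; obtain ⟨h', hval⟩ := hIval i hi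
    rw [List.length_map] at h'
    exact ⟨h', by rw [List.getElem_map] at hval; exact hval⟩
  have hJw : ∀ j ∈ J, ∃ hj : j < w.length, (w[j].2.1).toWord.head? = some (0, false) := by
    intro j hj; obtain ⟨h', hval⟩ := hJval j hj
    rw [List.length_map] at h'
    exact ⟨h', by rw [List.getElem_map] at hval; exact hval⟩
  have hKw : ∀ i ∈ K, ∃ hi : i < w.length, (w[i].2.2).toWord.head? = some (1, true) := by
    intro i hi; obtain ⟨h', hval⟩ := hKval i hi
    rw [List.length_map] at h'
    exact ⟨h', by rw [List.getElem_map] at hval; exact hval⟩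
  have hLw : ∀ j ∈ L, ∃ hj : j < w.length, (w[j].2.2).toWord.head? = some (0, false) := by
    intro j hj; obtain ⟨h', hval⟩ := hLval j hj
    rw [List.length_map] at h'
    exact ⟨h', by rw [List.getElem_map] at hval; exact hval⟩
  -- no position is both a surviving `d` and a surviving `f`
  have hIK : ∀ u, u ∈ I → u ∈ K → False := by
    intro u h1 h4
    obtain ⟨hu, e1⟩ := hIw u h1
    obtain ⟨hu', e2⟩ := hKw u h4
    exact (hok _ (List.getElem_mem hu)).2.2.1 ⟨e1, e2⟩
  -- no position is both a surviving `c⁻¹` and a surviving `e⁻¹`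
  have hJL : ∀ u, u ∈ J → u ∈ L → False := by
    intro u h1 h4
    obtain ⟨hu, e1⟩ := hJw u h1
    obtain ⟨hu', e2⟩ := hLw u h4
    exact (hok _ (List.getElem_mem hu)).2.2.2 ⟨e1, e2⟩
  -- the two possible kinds of doubly-surviving positions cannot coexist
  have hinter : ((I ∪ J) ∩ (K ∪ L)).card ≤ n := by
    by_cases hJK : (J ∩ K).Nonempty
    · have hIL : ∀ v, v ∈ I → v ∈ L → False := by
        intro v hv1 hv2
        obtain ⟨u, hu⟩ := hJK
        rw [Finset.mem_inter] at hu
        have hlt1 := hltIJ v hv1 u hu.1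
        have hlt2 := hltKL u hu.2 v hv2
        omega
      have hsub : (I ∪ J) ∩ (K ∪ L) ⊆ J := by
        intro u hu
        rw [Finset.mem_inter, Finset.mem_union, Finset.mem_union] at hu
        obtain ⟨h1 | h1, h4 | h4⟩ := hu
        · exact absurd (hIK u h1 h4) (by simp)
        · exact absurd (hIL u h1 h4) (by simp)
        · exact h1
        · exact absurd (hJL u h1 h4) (by simp)
      calc ((I ∪ J) ∩ (K ∪ L)).card ≤ J.card := Finset.card_le_card hsub
        _ ≤ n := by omega
    · have hJK' : ∀ v, v ∈ J → v ∈ K → False := by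
        intro v hv1 hv2
        exact hJK ⟨v, Finset.mem_inter.2 ⟨hv1, hv2⟩⟩
      have hsub : (I ∪ J) ∩ (K ∪ L) ⊆ I := by
        intro u hu
        rw [Finset.mem_inter, Finset.mem_union, Finset.mem_union] at hu
        obtain ⟨h1 | h1, h4 | h4⟩ := hu
        · exact absurd (hIK u h1 h4) (by simp)
        · exact h1
        · exact absurd (hJK' u h1 h4) (by simp)
        · exact absurd (hJL u h1 h4) (by simp)
      calc ((I ∪ J) ∩ (K ∪ L)).card ≤ I.card := Finset.card_le_card hsub
        _ ≤ n := by omega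
  have hIJd : Disjoint I J := by
    rw [Finset.disjoint_left]
    intro u hu hu'
    exact absurd (hltIJ u hu u hu') (lt_irrefl u)
  have hKLd : Disjoint K L := by
    rw [Finset.disjoint_left]
    intro u hu hu'
    exact absurd (hltKL u hu u hu') (lt_irrefl u)
  have hcardIJ : (I ∪ J).card = n + (n - 1) := by
    rw [Finset.card_union_of_disjoint hIJd, hIcard, hJcard]
  have hcardKL : (K ∪ L).card = n + n := by
    rw [Finset.card_union_of_disjoint hKLd, hKcard, hLcard]
  have hU := Finset.card_union_add_card_inter (I ∪ J) (K ∪ L)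
  have hrange : (I ∪ J) ∪ (K ∪ L) ⊆ Finset.range w.length := by
    intro u hu
    rw [Finset.mem_range]
    rcases Finset.mem_union.1 hu with h | h <;> rcases Finset.mem_union.1 h with h | h
    · obtain ⟨h', -⟩ := hIw u h; exact h'
    · obtain ⟨h', -⟩ := hJw u h; exact h'
    · obtain ⟨h', -⟩ := hKw u h; exact h'
    · obtain ⟨h', -⟩ := hLw u h; exact h'
  have hfinal := Finset.card_le_card hrange
  rw [Finset.card_range] at hfinal
  omega

private lemma pow_mul_inv_pow_eq_mk (i j : Fin 2) (k m : ℕ) :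
    (FreeGroup.of i) ^ k * ((FreeGroup.of j)⁻¹) ^ m
      = FreeGroup.mk (List.replicate k (i, true) ++ List.replicate m (j, false)) := by
  have h1 : ∀ (i : Fin 2) (k : ℕ),
      (FreeGroup.of i) ^ k = FreeGroup.mk (List.replicate k (i, true)) := by
    intro i k; rw [← FreeGroup.toWord_of_pow, FreeGroup.mk_toWord]
  have h2 : ((FreeGroup.of j)⁻¹) ^ m = FreeGroup.mk (List.replicate m (j, false)) := by
    rw [inv_pow, h1, FreeGroup.inv_mk]
    congr 1
    simp [FreeGroup.invRev]
  rw [h1, h2, FreeGroup.mul_mk]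

/-- For every `n ≥ 1` the words `α = (fa⁻¹)ⁿ(de⁻¹)ⁿ(ac⁻¹)ⁿ⁻¹` and
`β = (fb⁻¹)ⁿ(de⁻¹)ⁿ(bc⁻¹)ⁿ⁻¹` over `X ∪ X⁻¹` are geodesic words of length `3n−1`
in `(G_S,X)`: no strictly shorter word over `X ∪ X⁻¹` represents the same element. -/
theorem alpha_beta_geodesic (n : ℕ) (hn : 1 ≤ n) :
    (List.replicate n (f * a⁻¹) ++ List.replicate n (d * e⁻¹) ++
        List.replicate (n - 1) (a * c⁻¹)).length = 3 * n - 1 ∧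
    (List.replicate n (f * b⁻¹) ++ List.replicate n (d * e⁻¹) ++
        List.replicate (n - 1) (b * c⁻¹)).length = 3 * n - 1 ∧
    IsWord Xs (List.replicate n (f * a⁻¹) ++ List.replicate n (d * e⁻¹) ++
        List.replicate (n - 1) (a * c⁻¹)) ∧
    IsWord Xs (List.replicate n (f * b⁻¹) ++ List.replicate n (d * e⁻¹) ++
        List.replicate (n - 1) (b * c⁻¹)) ∧
    (∀ w : List F, IsWord Xs w →
      w.prod = (List.replicate n (f * a⁻¹) ++ List.replicate n (d * e⁻¹) ++
        List.replicate (n - 1) (a * c⁻¹)).prod → 3 * n - 1 ≤ w.length) ∧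
    (∀ w : List F, IsWord Xs w →
      w.prod = (List.replicate n (f * b⁻¹) ++ List.replicate n (d * e⁻¹) ++
        List.replicate (n - 1) (b * c⁻¹)).prod → 3 * n - 1 ≤ w.length) := by
  have hlenα : (List.replicate n (f * a⁻¹) ++ List.replicate n (d * e⁻¹) ++
      List.replicate (n - 1) (a * c⁻¹)).length = 3 * n - 1 := by
    simp only [List.length_append, List.length_replicate]; omega
  have hlenβ : (List.replicate n (f * b⁻¹) ++ List.replicate n (d * e⁻¹) ++
      List.replicate (n - 1) (b * c⁻¹)).length = 3 * n - 1 := by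
    simp only [List.length_append, List.length_replicate]; omega
  have hwordα : IsWord Xs (List.replicate n (f * a⁻¹) ++ List.replicate n (d * e⁻¹) ++
      List.replicate (n - 1) (a * c⁻¹)) := by
    intro x hx
    simp only [List.mem_append, List.mem_replicate] at hx
    rcases hx with (⟨-, rfl⟩ | ⟨-, rfl⟩) | ⟨-, rfl⟩
    · right; rw [mul_inv_rev, inv_inv]
      show _ ∈ Xs
      simp only [Xs, Set.mem_insert_iff, Set.mem_singleton_iff]
      exact Or.inr (Or.inr (Or.inr (Or.inl trivial)))
    · left
      simp only [Xs, Set.mem_insert_iff, Set.mem_singleton_iff]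
      exact Or.inr (Or.inr (Or.inr (Or.inr (Or.inr (Or.inr (Or.inr (Or.inr (Or.inr (Or.inr
        (Or.inl trivial))))))))))
    · left
      simp only [Xs, Set.mem_insert_iff, Set.mem_singleton_iff]
      exact Or.inl trivial
  have hwordβ : IsWord Xs (List.replicate n (f * b⁻¹) ++ List.replicate n (d * e⁻¹) ++
      List.replicate (n - 1) (b * c⁻¹)) := by
    intro x hx
    simp only [List.mem_append, List.mem_replicate] at hx
    rcases hx with (⟨-, rfl⟩ | ⟨-, rfl⟩) | ⟨-, rfl⟩
    · right; rw [mul_inv_rev, inv_inv]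
      show _ ∈ Xs
      simp only [Xs, Set.mem_insert_iff, Set.mem_singleton_iff]
      exact Or.inr (Or.inr (Or.inr (Or.inr (Or.inr (Or.inr (Or.inr (Or.inl trivial)))))))
    · left
      simp only [Xs, Set.mem_insert_iff, Set.mem_singleton_iff]
      exact Or.inr (Or.inr (Or.inr (Or.inr (Or.inr (Or.inr (Or.inr (Or.inr (Or.inr (Or.inr
        (Or.inl trivial))))))))))
    · left
      simp only [Xs, Set.mem_insert_iff, Set.mem_singleton_iff]
      exact Or.inr (Or.inr (Or.inr (Or.inr (Or.inl trivial))))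
  have hα2 : (List.replicate n (f * a⁻¹) ++ List.replicate n (d * e⁻¹) ++
      List.replicate (n - 1) (a * c⁻¹)).prod.2.1 = FreeGroup.mk
      (List.replicate n ((1 : Fin 2), true) ++ List.replicate (n - 1) ((0 : Fin 2), false)) := by
    rw [← pow_mul_inv_pow_eq_mk]
    simp [a, c, d, e, f, List.prod_append, List.prod_replicate]
  have hα3 : (List.replicate n (f * a⁻¹) ++ List.replicate n (d * e⁻¹) ++
      List.replicate (n - 1) (a * c⁻¹)).prod.2.2 = FreeGroup.mk
      (List.replicate n ((1 : Fin 2), true) ++ List.replicate n ((0 : Fin 2), false)) := by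
    rw [← pow_mul_inv_pow_eq_mk]
    simp [a, c, d, e, f, List.prod_append, List.prod_replicate]
  have hβ2 : (List.replicate n (f * b⁻¹) ++ List.replicate n (d * e⁻¹) ++
      List.replicate (n - 1) (b * c⁻¹)).prod.2.1 = FreeGroup.mk
      (List.replicate n ((1 : Fin 2), true) ++ List.replicate (n - 1) ((0 : Fin 2), false)) := by
    rw [← pow_mul_inv_pow_eq_mk]
    simp [b, c, d, e, f, List.prod_append, List.prod_replicate]
  have hβ3 : (List.replicate n (f * b⁻¹) ++ List.replicate n (d * e⁻¹) ++
      List.replicate (n - 1) (b * c⁻¹)).prod.2.2 = FreeGroup.mk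
      (List.replicate n ((1 : Fin 2), true) ++ List.replicate n ((0 : Fin 2), false)) := by
    rw [← pow_mul_inv_pow_eq_mk]
    simp [b, c, d, e, f, List.prod_append, List.prod_replicate]
  refine ⟨hlenα, hlenβ, hwordα, hwordβ, ?_, ?_⟩
  · intro w hw hprod
    exact lower_bound hn hw (by rw [hprod]; exact hα2) (by rw [hprod]; exact hα3)
  · intro w hw hprod
    exact lower_bound hn hw (by rw [hprod]; exact hβ2) (by rw [hprod]; exact hβ3)

end Stallings
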